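/- arXiv:2009.03352 — 5 statements merged into one kernel-verified Lean document; each statement's English description precedes it below -/
import Mathlib

section
/- For strings W and A over an alphabet, if W is a subsequence of A, then for every k with 0 ≤ k ≤ |W|, the prefix W(0,k] is a subsequence of the shortest prefix of A containing W(0,k], and the suffix W(k,|W|] is a subsequence of the corresponding suffix of A; moreover A decomposes as the concatenation of that shortest prefix, the middle segment Middle(A,W,k), and the shortest suffix containing W(k,|W|]. -/
open List

/-- Length of the shortest prefix of `A` containing `W` as a subsequence. -/
noncomputable def minPrefixLen {α : Type*} (A W : List α) : ℕ :=
  sInf {n | W <+ A.take n}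

/-- Length of the shortest suffix of `A` containing `W` as a subsequence. -/
noncomputable def minSuffixLen {α : Type*} (A W : List α) : ℕ :=
  sInf {n | W <+ A.drop (A.length - n)}

/-- `Middle A W k`: what remains of `A` after deleting the shortest prefix containing
`W.take k` as a subsequence and the shortest suffix containing `W.drop k` as a subsequence. -/
noncomputable def Middle {α : Type*} (A W : List α) (k : ℕ) : List α :=
  (A.take (A.length - minSuffixLen A (W.drop k))).drop (minPrefixLen A (W.take k))

theorem stmt0 {α : Type*} (A W : List α) (h : W <+ A) (k : ℕ) (hk : k ≤ W.length) :
    W.take k <+ A.take (minPrefixLen A (W.take k)) ∧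
    W.drop k <+ A.drop (A.length - minSuffixLen A (W.drop k)) ∧
    A = A.take (minPrefixLen A (W.take k)) ++ Middle A W k ++
        A.drop (A.length - minSuffixLen A (W.drop k)) := by
  -- split A = A₁ ++ A₂ with W.take k <+ A₁, W.drop k <+ A₂
  have hsplit : W.take k ++ W.drop k <+ A := by rw [List.take_append_drop]; exact h
  obtain ⟨A₁, A₂, rfl, h₁, h₂⟩ := List.append_sublist_iff.mp hsplit
  set p := minPrefixLen (A₁ ++ A₂) (W.take k) with hp
  set s := minSuffixLen (A₁ ++ A₂) (W.drop k) with hs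
  have hL : (A₁ ++ A₂).length = A₁.length + A₂.length := by simp
  -- nonemptiness / membership
  have hmemP : W.take k <+ (A₁ ++ A₂).take p := by
    have hne : A₁.length ∈ {n | W.take k <+ (A₁ ++ A₂).take n} := by
      simpa [List.take_left] using h₁
    exact Nat.sInf_mem ⟨_, hne⟩
  have hmemS : W.drop k <+ (A₁ ++ A₂).drop ((A₁ ++ A₂).length - s) := by
    have hne : A₂.length ∈ {n | W.drop k <+ (A₁ ++ A₂).drop ((A₁ ++ A₂).length - n)} := by
      simp only [Set.mem_setOf_eq, hL, Nat.add_sub_cancel]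
      simpa [List.drop_left] using h₂
    exact Nat.sInf_mem ⟨_, hne⟩
  have hpA : p ≤ A₁.length := Nat.sInf_le (by simpa [List.take_left] using h₁)
  have hsA : s ≤ A₂.length := Nat.sInf_le (by
    simp only [Set.mem_setOf_eq, hL, Nat.add_sub_cancel]
    simpa [List.drop_left] using h₂)
  have hple : p ≤ (A₁ ++ A₂).length - s := by omega
  refine ⟨hmemP, hmemS, ?_⟩
  unfold Middle
  rw [← hp, ← hs]
  have h1 : (A₁ ++ A₂).take p = ((A₁ ++ A₂).take ((A₁ ++ A₂).length - s)).take p := by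
    rw [List.take_take, Nat.min_eq_left hple]
  rw [h1, List.take_append_drop, List.take_append_drop]
end

section
/- Let A be a finite set of strings {A_1,...,A_L} and W a common subsequence of all strings in A. Then W is a maximal common subsequence of A if and only if for every k with 0 ≤ k ≤ |W|, the L substrings Middle(A_l, W, k), l = 1,...,L, share no common character. -/
open List

/-- `W` is a common subsequence of all strings in `𝒜`. -/
def IsCommonSubseq {α : Type*} (𝒜 : Finset (List α)) (W : List α) : Prop :=
  ∀ A ∈ 𝒜, W <+ A

/-- `W` is a maximal common subsequence of `𝒜`: it is a common subsequence and
inserting any single character at any position never yields a common subsequence. -/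
def IsMCS {α : Type*} (𝒜 : Finset (List α)) (W : List α) : Prop :=
  IsCommonSubseq 𝒜 W ∧
    ∀ (c : α) (k : ℕ), k ≤ W.length →
      ¬ IsCommonSubseq 𝒜 (W.take k ++ c :: W.drop k)

section Aux

variable {α : Type*}

lemma minPrefixLen_spec {A W : List α} (h : W <+ A) :
    W <+ A.take (minPrefixLen A W) :=
  Nat.sInf_mem (⟨A.length, by simpa using h⟩ : {n | W <+ A.take n}.Nonempty)

lemma minPrefixLen_le {A W : List α} {n : ℕ} (h : W <+ A.take n) :
    minPrefixLen A W ≤ n :=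
  Nat.sInf_le h

lemma minSuffixLen_spec {A W : List α} (h : W <+ A) :
    W <+ A.drop (A.length - minSuffixLen A W) :=
  Nat.sInf_mem (⟨A.length, by simpa using h⟩ : {n | W <+ A.drop (A.length - n)}.Nonempty)

lemma minSuffixLen_le {A W : List α} {n : ℕ} (h : W <+ A.drop (A.length - n)) :
    minSuffixLen A W ≤ n :=
  Nat.sInf_le h

/-- Greedy prefix lemma: the remainder after the shortest prefix containing `U`
still contains `X`. -/
lemma sublist_drop_minPrefixLen {U X A : List α} (h : U ++ X <+ A) :
    X <+ A.drop (minPrefixLen A U) := by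
  obtain ⟨r₁, r₂, rfl, h₁, h₂⟩ := append_sublist_iff.mp h
  have hp : minPrefixLen (r₁ ++ r₂) U ≤ r₁.length :=
    minPrefixLen_le (by rwa [take_left])
  calc X <+ r₂ := h₂
    _ = (r₁ ++ r₂).drop r₁.length := drop_left.symm
    _ = ((r₁ ++ r₂).drop (minPrefixLen (r₁ ++ r₂) U)).drop
          (r₁.length - minPrefixLen (r₁ ++ r₂) U) := by
        rw [drop_drop, Nat.add_sub_cancel' hp]
    _ <+ (r₁ ++ r₂).drop (minPrefixLen (r₁ ++ r₂) U) := drop_sublist _ _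

lemma minPrefixLen_le_length {A W : List α} (h : W <+ A) :
    minPrefixLen A W ≤ A.length :=
  minPrefixLen_le (by simpa using h)

lemma minSuffixLen_le_length {A W : List α} (h : W <+ A) :
    minSuffixLen A W ≤ A.length :=
  minSuffixLen_le (by simpa using h)

lemma prefix_add_suffix_le {A W : List α} (h : W <+ A) (k : ℕ) :
    minPrefixLen A (W.take k) + minSuffixLen A (W.drop k) ≤ A.length := by
  have h' : W.take k ++ W.drop k <+ A := by rw [take_append_drop]; exact h
  obtain ⟨r₁, r₂, hr, h₁, h₂⟩ := append_sublist_iff.mp h'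
  have hlen : A.length = r₁.length + r₂.length := by rw [hr, length_append]
  have hp : minPrefixLen A (W.take k) ≤ r₁.length :=
    minPrefixLen_le (by rw [hr, take_left]; exact h₁)
  have hs : minSuffixLen A (W.drop k) ≤ r₂.length := by
    apply minSuffixLen_le
    have : A.length - r₂.length = r₁.length := by omega
    rw [this, hr, drop_left]; exact h₂
  omega

/-- The key per-string lemma: inserting `c` at position `k` of `W` stays a
subsequence of `A` iff `c` occurs in `Middle A W k`. -/
lemma insert_sublist_iff_mem_Middle {A W : List α} (hWA : W <+ A) (c : α) (k : ℕ) :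
    (W.take k ++ c :: W.drop k) <+ A ↔ c ∈ Middle A W k := by
  set p := minPrefixLen A (W.take k) with hpdef
  set s := minSuffixLen A (W.drop k) with hsdef
  have hple : p ≤ A.length := minPrefixLen_le_length ((take_sublist k W).trans hWA)
  have hps : p + s ≤ A.length := prefix_add_suffix_le hWA k
  have hMid : Middle A W k = (A.drop p).take (A.length - s - p) := by
    rw [Middle, drop_take]
  constructor
  · intro h
    have hB : c :: W.drop k <+ A.drop p := sublist_drop_minPrefixLen h
    rw [← singleton_append] at hB
    obtain ⟨B₁, B₂, hBe, h₁, h₂⟩ := append_sublist_iff.mp hB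
    have hc : c ∈ B₁ := singleton_sublist.mp h₁
    have hlen : B₁.length + B₂.length = A.length - p := by
      rw [← length_append, ← hBe, length_drop]
    have hs2 : s ≤ B₂.length := by
      apply minSuffixLen_le
      have he : A.length - B₂.length = p + B₁.length := by omega
      rw [he, ← drop_drop, hBe, drop_left]; exact h₂
    have hB1 : B₁.length ≤ A.length - s - p := by omega
    have h1 : (Middle A W k).take B₁.length = B₁ := by
      rw [hMid, take_take, min_eq_left hB1, hBe, take_left]
    rw [← h1] at hc
    exact mem_of_mem_take hc
  · intro hc
    obtain ⟨X, Y, hXY⟩ := append_of_mem hc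
    have hU : W.take k <+ A.take p := minPrefixLen_spec ((take_sublist k W).trans hWA)
    have hV : W.drop k <+ A.drop (A.length - s) := minSuffixLen_spec ((drop_sublist k W).trans hWA)
    have hMlen : (Middle A W k).length = A.length - s - p := by
      rw [hMid, length_take, length_drop]
      omega
    have hXlen : X.length + 1 ≤ A.length - s - p := by
      have : (Middle A W k).length = X.length + 1 + Y.length := by
        rw [hXY]; simp; omega
      omega
    have hdecomp : A = (A.take p ++ X) ++ c :: (Y ++ A.drop (A.length - s)) := by
      have h1 : A.drop p = Middle A W k ++ A.drop (A.length - s) := by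
        rw [hMid]
        have : A.drop (A.length - s) = ((A.drop p).drop (A.length - s - p)) := by
          rw [drop_drop]
          congr 1
          omega
        rw [this, take_append_drop]
      calc A = A.take p ++ A.drop p := (take_append_drop p A).symm
        _ = A.take p ++ (Middle A W k ++ A.drop (A.length - s)) := by rw [h1]
        _ = (A.take p ++ X) ++ c :: (Y ++ A.drop (A.length - s)) := by
            rw [hXY]; simp
    rw [hdecomp]
    exact Sublist.append (hU.trans (sublist_append_left _ _))
      ((hV.trans (sublist_append_right _ _)).cons₂ c)

end Aux

theorem stmt1 {α : Type*} (𝒜 : Finset (List α)) (W : List α)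
    (hW : IsCommonSubseq 𝒜 W) :
    IsMCS 𝒜 W ↔
      ∀ k : ℕ, k ≤ W.length → ¬ ∃ c : α, ∀ A ∈ 𝒜, c ∈ Middle A W k := by
  constructor
  · rintro ⟨-, hmax⟩ k hk ⟨c, hc⟩
    exact hmax c k hk fun A hA =>
      (insert_sublist_iff_mem_Middle (hW A hA) c k).mpr (hc A hA)
  · intro h
    refine ⟨hW, fun c k hk hcs => h k hk ⟨c, fun A hA =>
      (insert_sublist_iff_mem_Middle (hW A hA) c k).mp (hcs A hA)⟩⟩
end

section
/- Let W be a common subsequence of a finite set of strings A such that for some k with 0 ≤ k ≤ |W|, a character c is common to all the substrings Middle(A_l, W, k). Then W(0,k] ⊕ c ⊕ W(k,|W|] is a common subsequence of A containing W as a subsequence and having length |W| + 1. -/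
open List

theorem stmt6 {α : Type*} (𝒜 : Finset (List α)) (W : List α)
    (hW : IsCommonSubseq 𝒜 W) (k : ℕ) (hk : k ≤ W.length) (c : α)
    (hc : ∀ A ∈ 𝒜, c ∈ Middle A W k) :
    IsCommonSubseq 𝒜 (W.take k ++ c :: W.drop k) ∧
    W <+ (W.take k ++ c :: W.drop k) ∧
    (W.take k ++ c :: W.drop k).length = W.length + 1 := by
  refine ⟨?_, ?_, ?_⟩
  · intro A hA
    have hWA := hW A hA
    have hcA := hc A hA
    set p := minPrefixLen A (W.take k) with hp
    set s := minSuffixLen A (W.drop k) with hs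
    -- p is in the defining set
    have hpmem : W.take k <+ A.take p := by
      have hne : {n | W.take k <+ A.take n}.Nonempty :=
        ⟨A.length, by simpa using (List.take_sublist k W).trans hWA⟩
      exact Nat.sInf_mem hne
    have hsmem : W.drop k <+ A.drop (A.length - s) := by
      have hne : {n | W.drop k <+ A.drop (A.length - n)}.Nonempty :=
        ⟨A.length, by simpa using (List.drop_sublist k W).trans hWA⟩
      exact Nat.sInf_mem hne
    -- Middle nonempty gives p ≤ length of the truncated list
    have hple : p ≤ (A.take (A.length - s)).length := by
      by_contra h
      push_neg at h
      have : Middle A W k = [] := by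
        unfold Middle
        rw [← hp, ← hs]
        exact List.drop_eq_nil_of_le h.le
      simp [this] at hcA
    have hsplit : A.take p ++ Middle A W k ++ A.drop (A.length - s) = A := by
      unfold Middle
      rw [← hp, ← hs]
      have h1 : (A.take (A.length - s)).take p = A.take p := by
        rw [List.take_take]
        congr 1
        have : p ≤ A.length - s := le_trans hple (by simp)
        omega
      rw [← h1, List.take_append_drop, List.take_append_drop]
    have hc1 : [c] <+ Middle A W k := List.singleton_sublist.mpr hcA
    have hsub := (hpmem.append hc1).append hsmem
    rw [← hsplit]
    simpa using hsub
  · conv_lhs => rw [← List.take_append_drop k W]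
    exact (List.Sublist.refl _).append (List.sublist_cons_self _ _)
  · simp [Nat.add_comm]; omega
end

section
/- If W is a common subsequence of the set of strings A and there exist 0 ≤ k ≤ |W| and a character c common to all Middle(A_l, W, k), then W is a proper subsequence of some common subsequence of A of strictly greater length; consequently, any procedure that repeatedly performs such insertions starting from the empty string terminates after at most min_l |A_l| insertions with a maximal common subsequence. -/
open List

lemma minPrefix_spec {α : Type*} {A W : List α} (h : W <+ A) :
    W <+ A.take (minPrefixLen A W) :=
  Nat.sInf_mem (⟨A.length, by simpa using h⟩ : Set.Nonempty {n | W <+ A.take n})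

lemma minSuffix_spec {α : Type*} {A W : List α} (h : W <+ A) :
    W <+ A.drop (A.length - minSuffixLen A W) :=
  Nat.sInf_mem (⟨A.length, by simpa using h⟩ :
    Set.Nonempty {n | W <+ A.drop (A.length - n)})

lemma insert_sub {α : Type*} {A W : List α} {k : ℕ} {c : α}
    (h : W <+ A) (hc : c ∈ Middle A W k) :
    W.take k ++ c :: W.drop k <+ A := by
  set p := minPrefixLen A (W.take k) with hp
  set x := A.length - minSuffixLen A (W.drop k) with hx
  have h1 : W.take k <+ A.take p := minPrefix_spec ((take_sublist k W).trans h)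
  have h2 : W.drop k <+ A.drop x := minSuffix_spec ((drop_sublist k W).trans h)
  have hcm : c ∈ (A.take x).drop p := hc
  have hplt : p ≤ x := by
    by_contra hpx
    push_neg at hpx
    have hnil : (A.take x).drop p = [] := by
      apply drop_eq_nil_of_le
      have : (A.take x).length ≤ x := by simp
      omega
    simp [hnil] at hcm
  have hdecomp : A.take p ++ ((A.take x).drop p ++ A.drop x) = A := by
    rw [show A.take p = (A.take x).take p by rw [take_take, min_eq_left hplt],
      ← append_assoc, take_append_drop, take_append_drop]
  calc W.take k ++ c :: W.drop k
      <+ A.take p ++ ((A.take x).drop p ++ A.drop x) :=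
        Sublist.append h1 (Sublist.append (singleton_sublist.mpr hcm) h2)
    _ = A := hdecomp

theorem stmt11 {α : Type*} (𝒜 : Finset (List α)) :
    -- a valid insertion strictly enlarges the common subsequence
    (∀ (W : List α), IsCommonSubseq 𝒜 W →
      (∃ k : ℕ, k ≤ W.length ∧ ∃ c : α, ∀ A ∈ 𝒜, c ∈ Middle A W k) →
      ∃ V : List α, IsCommonSubseq 𝒜 V ∧ W <+ V ∧ W ≠ V ∧ W.length < V.length) ∧
    -- consequently, any procedure performing such insertions starting from the empty
    -- string reaches a maximal common subsequence after at most `min_l |A_l|` insertions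
    (∀ (A₀ : List α), A₀ ∈ 𝒜 → (∀ A ∈ 𝒜, A₀.length ≤ A.length) →
      ∀ f : ℕ → List α, f 0 = [] →
        (∀ i, IsCommonSubseq 𝒜 (f i)) →
        (∀ i, ¬ IsMCS 𝒜 (f i) →
          f i <+ f (i + 1) ∧ (f (i + 1)).length = (f i).length + 1) →
        ∃ i ≤ A₀.length, IsMCS 𝒜 (f i)) := by
  constructor
  · rintro W hW ⟨k, hk, c, hc⟩
    refine ⟨W.take k ++ c :: W.drop k, fun A hA => insert_sub (hW A hA) (hc A hA), ?_, ?_, ?_⟩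
    · conv_lhs => rw [← take_append_drop k W]
      exact Sublist.append (Sublist.refl _) (sublist_cons_self c _)
    · intro he
      have := congrArg List.length he
      simp at this
      omega
    · simp; omega
  · intro A₀ hA₀ _ f hf0 hcs hstep
    by_contra hcon
    push_neg at hcon
    have hlen : ∀ i ≤ A₀.length + 1, (f i).length = i := by
      intro i
      induction i with
      | zero => intro _; simp [hf0]
      | succ n ih =>
        intro hn
        have h1 := ih (by omega)
        have h2 := (hstep n (hcon n (by omega))).2
        omega
    have h1 : (f (A₀.length + 1)).length = A₀.length + 1 := hlen _ le_rfl
    have h2 : (f (A₀.length + 1)).length ≤ A₀.length :=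
      (hcs (A₀.length + 1) A₀ hA₀).length_le
    omega
end

section
/- For any string A, subsequence W of A, character c, and index 0 ≤ k ≤ |W|: the string W(0,k] ⊕ c ⊕ W(k,|W|] is a subsequence of A if c occurs in Middle(A,W,k). -/
open List

theorem stmt16 {α : Type*} (A W : List α) (hW : W <+ A) (c : α)
    (k : ℕ) (hk : k ≤ W.length) (hc : c ∈ Middle A W k) :
    W.take k ++ c :: W.drop k <+ A := by
  set p := minPrefixLen A (W.take k) with hp
  set s := minSuffixLen A (W.drop k) with hs
  have h1 : W.take k <+ A.take p := by
    have hne : ({n | W.take k <+ A.take n} : Set ℕ).Nonempty :=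
      ⟨A.length, by simpa using (W.take_sublist k).trans hW⟩
    exact Nat.sInf_mem hne
  have h2 : W.drop k <+ A.drop (A.length - s) := by
    have hne : ({n | W.drop k <+ A.drop (A.length - n)} : Set ℕ).Nonempty :=
      ⟨A.length, by simpa using (W.drop_sublist k).trans hW⟩
    exact Nat.sInf_mem hne
  have hple : p ≤ (A.take (A.length - s)).length := by
    by_contra h
    push_neg at h
    rw [Middle, ← hp, ← hs, List.drop_eq_nil_of_le h.le] at hc
    simp at hc
  have hsplit : A.drop p = Middle A W k ++ A.drop (A.length - s) := by
    rw [Middle, ← hp, ← hs]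
    conv_lhs => rw [← List.take_append_drop (A.length - s) A]
    rw [List.drop_append_of_le_length hple]
  obtain ⟨l1, l2, hmid⟩ := List.mem_iff_append.mp hc
  have h3 : c :: W.drop k <+ A.drop p := by
    rw [hsplit, hmid, List.append_assoc, List.cons_append]
    exact ((h2.trans (List.sublist_append_right l2 _)).cons₂ c).trans
      (List.sublist_append_right l1 _)
  calc W.take k ++ c :: W.drop k <+ A.take p ++ A.drop p := h1.append h3
    _ = A := List.take_append_drop p A
end
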